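/- arXiv:2003.03647 — 2 statements merged into one kernel-verified Lean document; each statement's English description precedes it below -/
import Mathlib

section
/- Let X be a real random variable, b > 0, and h > 0. Then E[e^{hX} · 1_{|X| ≤ b}] ≤ exp( h·E[X · 1_{|X| ≤ b}] + ((e^{hb} - 1 - hb)/b²) · E[X² · 1_{|X| ≤ b}] ). -/
open MeasureTheory Nat

lemma exp_series_shift (x : ℝ) :
    Real.exp x = 1 + x + ∑' n : ℕ, x ^ (n + 2) / (n + 2)! := by
  have hsum : Summable (fun n : ℕ => x ^ n / n !) := Real.summable_pow_div_factorial x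
  have h0 : Real.exp x = ∑' n : ℕ, x ^ n / n ! := by
    rw [Real.exp_eq_exp_ℝ, NormedSpace.exp_eq_tsum_div]
  rw [h0, ← (Summable.sum_add_tsum_nat_add 2 hsum)]
  simp [Finset.sum_range_succ]

set_option maxHeartbeats 1000000 in
lemma key_ineq {u t : ℝ} (ht : 0 < t) (hu : |u| ≤ t) :
    Real.exp u ≤ 1 + u + u ^ 2 / t ^ 2 * (Real.exp t - 1 - t) := by
  have hsum_u : Summable (fun n : ℕ => u ^ (n + 2) / (n + 2)!) :=
    (summable_nat_add_iff 2).2 (Real.summable_pow_div_factorial u)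
  have hsum_t : Summable (fun n : ℕ => t ^ (n + 2) / (n + 2)!) :=
    (summable_nat_add_iff 2).2 (Real.summable_pow_div_factorial t)
  have hrw : Real.exp t - 1 - t = ∑' n : ℕ, t ^ (n + 2) / (n + 2)! := by
    rw [exp_series_shift t]; ring
  have hrwu : Real.exp u = 1 + u + ∑' n : ℕ, u ^ (n + 2) / (n + 2)! := exp_series_shift u
  rw [hrwu, hrw, ← tsum_mul_left]
  refine add_le_add (le_refl _) (Summable.tsum_le_tsum ?_ hsum_u (hsum_t.mul_left _))
  intro n
  rw [mul_div_assoc', div_le_div_iff_of_pos_right (by positivity)]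
  have h1 : u ^ (n + 2) ≤ u ^ 2 * t ^ n := by
    calc u ^ (n + 2) = u ^ 2 * u ^ n := by ring
      _ ≤ u ^ 2 * |u ^ n| := by nlinarith [le_abs_self (u ^ n), sq_nonneg u]
      _ ≤ u ^ 2 * t ^ n := by
          rw [abs_pow]
          exact mul_le_mul_of_nonneg_left (pow_le_pow_left₀ (abs_nonneg u) hu n) (sq_nonneg u)
  calc u ^ (n + 2) ≤ u ^ 2 * t ^ n := h1
    _ = u ^ 2 / t ^ 2 * t ^ (n + 2) := by field_simp; ring

/-- Fuk–Nagaev exponential moment bound: for a real random variable `X`, `b > 0`, `h > 0`,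
`E[e^{hX} ; |X| ≤ b] ≤ exp (h E[X ; |X| ≤ b] + ((e^{hb} - 1 - hb)/b²) E[X² ; |X| ≤ b])`. -/
theorem fuk_nagaev_exponential_bound {Ω : Type*} [MeasurableSpace Ω] (μ : Measure Ω)
    [IsProbabilityMeasure μ] (X : Ω → ℝ) (hXm : Measurable X) (b h : ℝ)
    (hb : 0 < b) (hh : 0 < h)
    (hint1 : IntegrableOn X {ω | |X ω| ≤ b} μ)
    (hint2 : IntegrableOn (fun ω => X ω ^ 2) {ω | |X ω| ≤ b} μ) :
    (∫ ω in {ω | |X ω| ≤ b}, Real.exp (h * X ω) ∂μ) ≤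
      Real.exp (h * (∫ ω in {ω | |X ω| ≤ b}, X ω ∂μ) +
        (Real.exp (h * b) - 1 - h * b) / b ^ 2 *
          ∫ ω in {ω | |X ω| ≤ b}, X ω ^ 2 ∂μ) := by
  set A : Set Ω := {ω | |X ω| ≤ b} with hA_def
  set c : ℝ := (Real.exp (h * b) - 1 - h * b) / b ^ 2 with hc_def
  have hA : MeasurableSet A := measurableSet_le hXm.abs measurable_const
  have hpt : ∀ ω ∈ A, Real.exp (h * X ω) ≤ 1 + h * X ω + c * X ω ^ 2 := by
    intro ω hω
    have hu : |h * X ω| ≤ h * b := by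
      rw [abs_mul, abs_of_pos hh]
      exact mul_le_mul_of_nonneg_left hω hh.le
    have := key_ineq (mul_pos hh hb) hu
    have heq : (h * X ω) ^ 2 / (h * b) ^ 2 * (Real.exp (h * b) - 1 - h * b)
        = c * X ω ^ 2 := by
      rw [hc_def]; field_simp
    linarith [this, heq.symm.le]
  have hexp_int : IntegrableOn (fun ω => Real.exp (h * X ω)) A μ := by
    refine Integrable.mono' (integrable_const (Real.exp (h * b)))
      ((Real.measurable_exp.comp (hXm.const_mul h)).aestronglyMeasurable) ?_
    rw [ae_restrict_iff' hA]
    filter_upwards with ω hω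
    rw [Real.norm_eq_abs, abs_of_pos (Real.exp_pos _)]
    apply Real.exp_le_exp.2
    have : X ω ≤ b := le_trans (le_abs_self _) hω
    exact mul_le_mul_of_nonneg_left this hh.le
  have hrhs_int : IntegrableOn (fun ω => 1 + h * X ω + c * X ω ^ 2) A μ :=
    ((integrable_const 1).add (hint1.const_mul h)).add (hint2.const_mul c)
  have h1 : (∫ ω in A, Real.exp (h * X ω) ∂μ) ≤ ∫ ω in A, (1 + h * X ω + c * X ω ^ 2) ∂μ :=
    setIntegral_mono_on hexp_int hrhs_int hA hpt
  have h2 : (∫ ω in A, (1 + h * X ω + c * X ω ^ 2) ∂μ)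
      = (μ A).toReal + h * (∫ ω in A, X ω ∂μ) + c * ∫ ω in A, X ω ^ 2 ∂μ := by
    have i1 : Integrable (fun ω => (1:ℝ) + h * X ω) (μ.restrict A) := by
      exact (integrable_const 1).add (hint1.const_mul h)
    have i0 : Integrable (fun _ : Ω => (1:ℝ)) (μ.restrict A) := integrable_const 1
    have ih : Integrable (fun ω => h * X ω) (μ.restrict A) := hint1.const_mul h
    rw [integral_add i1 (hint2.const_mul c), integral_add i0 ih,
      integral_const, integral_const_mul, integral_const_mul]
    simp [smul_eq_mul, Measure.real]
  have h3 : (μ A).toReal ≤ 1 := by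
    have h4 : μ A ≤ 1 := prob_le_one
    simpa using ENNReal.toReal_mono ENNReal.one_ne_top h4
  calc (∫ ω in A, Real.exp (h * X ω) ∂μ)
      ≤ (μ A).toReal + h * (∫ ω in A, X ω ∂μ) + c * ∫ ω in A, X ω ^ 2 ∂μ := by
        rw [← h2]; exact h1
    _ ≤ 1 + (h * (∫ ω in A, X ω ∂μ) + c * ∫ ω in A, X ω ^ 2 ∂μ) := by linarith
    _ ≤ Real.exp (h * (∫ ω in A, X ω ∂μ) + c * ∫ ω in A, X ω ^ 2 ∂μ) := by
        linarith [Real.add_one_le_exp (h * (∫ ω in A, X ω ∂μ) + c * ∫ ω in A, X ω ^ 2 ∂μ)]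
end

section
/- Let d ≥ 1 and a > 0. Then lim_{T → ∞} ∑_{n ≥ a·T} T^{d/2} · n^{-1 - d/2} · exp(-T/(2n)) = ∫_a^∞ v^{-1 - d/2} · exp(-1/(2v)) dv, where the sum is over integers n ≥ a·T. -/
open scoped Classical
open MeasureTheory Filter Set Topology

namespace RiemannTail

noncomputable def tf (d : ℕ) (a T : ℝ) (n : ℕ) : ℝ :=
  if a * T ≤ (n : ℝ) then
    T ^ ((d : ℝ) / 2) * (n : ℝ) ^ (-1 - (d : ℝ) / 2) * Real.exp (-T / (2 * n))
  else 0

noncomputable def G (d : ℕ) (a T v : ℝ) : ℝ := T * tf d a T ⌈T * v⌉₊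

noncomputable def ff (d : ℕ) (v : ℝ) : ℝ :=
  v ^ (-1 - (d : ℝ) / 2) * Real.exp (-1 / (2 * v))

lemma tf_nonneg (d : ℕ) (a T : ℝ) (hT : 0 ≤ T) (n : ℕ) : 0 ≤ tf d a T n := by
  unfold tf; split
  · positivity
  · exact le_rfl

lemma tf_le (d : ℕ) (a T : ℝ) (hT : 0 ≤ T) (n : ℕ) :
    tf d a T n ≤ T ^ ((d : ℝ) / 2) * (n : ℝ) ^ (-1 - (d : ℝ) / 2) := by
  unfold tf; split
  · have h1 : Real.exp (-T / (2 * n)) ≤ 1 := by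
      rw [Real.exp_le_one_iff]
      apply div_nonpos_of_nonpos_of_nonneg <;> [linarith; positivity]
    have h2 : 0 ≤ T ^ ((d : ℝ) / 2) * (n : ℝ) ^ (-1 - (d : ℝ) / 2) := by positivity
    exact mul_le_of_le_one_right h2 h1 |>.trans_eq rfl
  · positivity

lemma summable_tf (d : ℕ) (hd : 1 ≤ d) (a T : ℝ) (hT : 0 ≤ T) : Summable (tf d a T) := by
  have hd' : (1 : ℝ) ≤ d := by exact_mod_cast hd
  have hp : (-1 - (d : ℝ) / 2) < -1 := by linarith
  have hs : Summable (fun n : ℕ => T ^ ((d : ℝ) / 2) * (n : ℝ) ^ (-1 - (d : ℝ) / 2)) :=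
    (Real.summable_nat_rpow.mpr hp).mul_left _
  exact Summable.of_nonneg_of_le (tf_nonneg d a T hT) (tf_le d a T hT) hs

lemma measG (d : ℕ) (a T : ℝ) : Measurable (G d a T) := by
  have h1 : Measurable fun v : ℝ => ⌈T * v⌉₊ := (measurable_const.mul measurable_id).nat_ceil
  have h2 : Measurable fun m : ℕ => tf d a T m := measurable_from_top
  exact (h2.comp h1).const_mul T

lemma Tpow (d : ℕ) {T : ℝ} (hT : 0 < T) :
    T * T ^ ((d : ℝ) / 2) * T ^ (-1 - (d : ℝ) / 2) = 1 := by
  nth_rewrite 1 [← Real.rpow_one T]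
  rw [← Real.rpow_add hT, ← Real.rpow_add hT,
    show (1 : ℝ) + (d : ℝ) / 2 + (-1 - (d : ℝ) / 2) = 0 by ring, Real.rpow_zero]

lemma G_le (d : ℕ) {a T v : ℝ} (ha : 0 < a) (hT2 : 2 / a ≤ T) (hv : 0 < v) :
    G d a T v ≤ indicator (Ioi (a / 2)) (fun v : ℝ => v ^ (-1 - (d : ℝ) / 2)) v := by
  have hT0 : 0 < T := lt_of_lt_of_le (by positivity) hT2
  unfold G tf
  split
  · rename_i h
    set m := ⌈T * v⌉₊ with hm
    have hm1 : (m : ℝ) < T * v + 1 := Nat.ceil_lt_add_one (by positivity)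
    have hm2 : T * v ≤ (m : ℝ) := Nat.le_ceil _
    have hTi : 1 / T ≤ a / 2 := by
      rw [div_le_div_iff₀ hT0 (by norm_num)]
      calc 1 * 2 = 2 := by ring
        _ = (2 / a) * a := by field_simp
        _ ≤ T * a := by gcongr
        _ = a * T := mul_comm _ _
    have hva : a / 2 < v := by
      have h1 : a * T - 1 < T * v := by linarith
      have h2 : a - 1 / T < v := by
        have h2' : (a - 1 / T) * T < v * T := by
          have he : (a - 1 / T) * T = a * T - 1 := by field_simp
          rw [he]; linarith [mul_comm T v]
        exact lt_of_mul_lt_mul_right h2' hT0.le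
      linarith
    rw [indicator_of_mem (by exact hva) _]
    have hmp : (m : ℝ) ^ (-1 - (d : ℝ) / 2) ≤ (T * v) ^ (-1 - (d : ℝ) / 2) :=
      Real.rpow_le_rpow_of_nonpos (by positivity) hm2
        (by linarith [(Nat.cast_nonneg d : (0:ℝ) ≤ d)])
    have hexp : Real.exp (-T / (2 * m)) ≤ 1 := by
      rw [Real.exp_le_one_iff]
      apply div_nonpos_of_nonpos_of_nonneg <;> [linarith; positivity]
    calc T * (T ^ ((d : ℝ) / 2) * (m : ℝ) ^ (-1 - (d : ℝ) / 2) * Real.exp (-T / (2 * m)))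
        ≤ T * (T ^ ((d : ℝ) / 2) * (T * v) ^ (-1 - (d : ℝ) / 2) * 1) := by gcongr
      _ = (T * T ^ ((d : ℝ) / 2) * T ^ (-1 - (d : ℝ) / 2)) * v ^ (-1 - (d : ℝ) / 2) := by
          rw [Real.mul_rpow hT0.le hv.le]; ring
      _ = v ^ (-1 - (d : ℝ) / 2) := by rw [Tpow d hT0, one_mul]
  · rw [mul_zero]
    exact indicator_nonneg (fun x hx => Real.rpow_nonneg (lt_trans (half_pos ha) hx).le _) v

lemma integrable_bound (d : ℕ) (hd : 1 ≤ d) {a : ℝ} (ha : 0 < a) :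
    Integrable (indicator (Ioi (a / 2)) (fun v : ℝ => v ^ (-1 - (d : ℝ) / 2))) := by
  have hd' : (1 : ℝ) ≤ d := by exact_mod_cast hd
  have hp : (-1 - (d : ℝ) / 2) < -1 := by linarith
  exact (integrableOn_Ioi_rpow_of_lt hp (half_pos ha)).integrable_indicator measurableSet_Ioi

lemma integrableOn_G (d : ℕ) (hd : 1 ≤ d) {a T : ℝ} (ha : 0 < a) (hT2 : 2 / a ≤ T) :
    IntegrableOn (G d a T) (Ioi 0) := by
  have hT0 : 0 < T := lt_of_lt_of_le (by positivity) hT2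
  refine Integrable.mono (integrable_bound d hd ha).restrict
    ((measG d a T).aestronglyMeasurable) ?_
  filter_upwards [self_mem_ae_restrict measurableSet_Ioi] with v hv
  rw [Real.norm_eq_abs, Real.norm_eq_abs,
    abs_of_nonneg (show (0:ℝ) ≤ G d a T v from mul_nonneg hT0.le (tf_nonneg d a T hT0.le _))]
  exact le_trans (G_le d ha hT2 hv)
    (le_abs_self _)

lemma sum_eq_integral (d : ℕ) (hd : 1 ≤ d) {a T : ℝ} (ha : 0 < a) (hT2 : 2 / a ≤ T) :
    ∑' n : ℕ, tf d a T n = ∫ v in Ioi (0:ℝ), G d a T v := by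
  have hT0 : 0 < T := lt_of_lt_of_le (by positivity) hT2
  set s : ℕ → Set ℝ := fun n => Ioc ((n : ℝ) / T) (((n : ℝ) + 1) / T) with hs
  have hUnion : Ioi (0:ℝ) = ⋃ n : ℕ, s n := by
    ext x
    simp only [mem_Ioi, mem_iUnion, hs, mem_Ioc]
    constructor
    · intro hx
      obtain ⟨n, hn⟩ := Nat.exists_eq_succ_of_ne_zero
        (Nat.pos_iff_ne_zero.mp (Nat.ceil_pos.mpr (by positivity)) : ⌈T * x⌉₊ ≠ 0)
      refine ⟨n, ?_, ?_⟩
      · rw [div_lt_iff₀ hT0]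
        have := Nat.lt_ceil.mp (by rw [hn]; exact Nat.lt_succ_self n)
        linarith [mul_comm T x]
      · rw [le_div_iff₀ hT0]
        have := Nat.le_ceil (T * x)
        rw [hn] at this
        push_cast at this
        linarith [mul_comm T x]
    · rintro ⟨n, hn1, _⟩
      exact lt_of_le_of_lt (by positivity) hn1
  have hmeas : ∀ n, MeasurableSet (s n) := fun n => measurableSet_Ioc
  have hdisj : Pairwise (Function.onFun Disjoint s) := by
    intro i j hij
    rcases hij.lt_or_gt with h | h
    · refine Set.Ioc_disjoint_Ioc.mpr ?_
      refine le_trans (min_le_left _ _) (le_trans ?_ (le_max_right _ _))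
      have : (i : ℝ) + 1 ≤ (j : ℝ) := by exact_mod_cast h
      gcongr
    · refine Set.Ioc_disjoint_Ioc.mpr ?_
      refine le_trans (min_le_right _ _) (le_trans ?_ (le_max_left _ _))
      have : (j : ℝ) + 1 ≤ (i : ℝ) := by exact_mod_cast h
      gcongr
  have hInt : IntegrableOn (G d a T) (⋃ n, s n) := hUnion ▸ integrableOn_G d hd ha hT2
  have hpiece : ∀ n : ℕ, ∫ v in s n, G d a T v = tf d a T (n + 1) := by
    intro n
    have hconst : EqOn (G d a T) (fun _ => T * tf d a T (n + 1)) (s n) := by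
      intro v hv
      have hceil : ⌈T * v⌉₊ = n + 1 := by
        rw [Nat.ceil_eq_iff (Nat.succ_ne_zero n)]
        obtain ⟨hv1, hv2⟩ := hv
        rw [div_lt_iff₀ hT0] at hv1
        rw [le_div_iff₀ hT0] at hv2
        push_cast
        constructor <;> linarith [mul_comm T v, mul_comm v T]
      simp only [G, hceil]
    rw [setIntegral_congr_fun (hmeas n) hconst, setIntegral_const]
    rw [measureReal_def, Real.volume_Ioc, ENNReal.toReal_ofReal (by rw [sub_nonneg]; gcongr <;> linarith)]
    rw [smul_eq_mul, show ((n : ℝ) + 1) / T - (n : ℝ) / T = 1 / T by field_simp; ring]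
    rw [← mul_assoc, one_div_mul_cancel hT0.ne', one_mul]
  have hsummable := summable_tf d hd a T hT0.le
  rw [hUnion, integral_iUnion hmeas hdisj hInt]
  simp_rw [hpiece]
  rw [hsummable.tsum_eq_zero_add]
  have h0 : tf d a T 0 = 0 := by
    simp only [tf, Nat.cast_zero]
    rw [if_neg (not_le.mpr (mul_pos ha hT0))]
  rw [h0, zero_add]

lemma tendsto_ceil_div {v : ℝ} (hv : 0 < v) :
    Tendsto (fun T : ℝ => (⌈T * v⌉₊ : ℝ) / T) atTop (𝓝 v) := by
  have h1 : Tendsto (fun T : ℝ => v + 1 / T) atTop (𝓝 v) := by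
    have h0 : Tendsto (fun T : ℝ => T⁻¹) atTop (𝓝 0) := tendsto_inv_atTop_zero
    simpa [one_div] using (tendsto_const_nhds (x := v) (f := (atTop : Filter ℝ))).add h0
  refine tendsto_of_tendsto_of_tendsto_of_le_of_le' tendsto_const_nhds h1 ?_ ?_
  · filter_upwards [eventually_gt_atTop (0:ℝ)] with T hT
    rw [le_div_iff₀ hT]
    calc v * T = T * v := mul_comm _ _
      _ ≤ _ := Nat.le_ceil _
  · filter_upwards [eventually_gt_atTop (0:ℝ)] with T hT
    rw [div_le_iff₀ hT]
    have h2 : (v + 1 / T) * T = T * v + 1 := by field_simp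
    rw [h2]
    exact (Nat.ceil_lt_add_one (by positivity : (0:ℝ) ≤ T * v)).le

lemma G_tendsto (d : ℕ) {a v : ℝ} (ha : 0 < a) (hv : 0 < v) (hva : v ≠ a) :
    Tendsto (fun T => G d a T v) atTop (𝓝 (indicator (Ioi a) (ff d) v)) := by
  rcases hva.lt_or_gt with h | h
  · -- v < a : eventually zero
    rw [indicator_of_notMem (by simpa using h.le)]
    have hev : ∀ᶠ T in atTop, G d a T v = 0 := by
      filter_upwards [eventually_ge_atTop (max 1 (1 / (a - v)))] with T hT
      have hT1 : (1:ℝ) ≤ T := le_trans (le_max_left _ _) hT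
      have hT0 : (0:ℝ) < T := lt_of_lt_of_le one_pos hT1
      have hT2 : 1 / (a - v) ≤ T := le_trans (le_max_right _ _) hT
      have hcond : ¬ a * T ≤ (⌈T * v⌉₊ : ℝ) := by
        push_neg
        calc (⌈T * v⌉₊ : ℝ) < T * v + 1 := Nat.ceil_lt_add_one (by positivity)
          _ ≤ T * v + (a - v) * T := by
              have := (div_le_iff₀ (by linarith : (0:ℝ) < a - v)).mp hT2
              nlinarith
          _ = a * T := by ring
      simp only [G, tf, if_neg hcond, mul_zero]
    exact Tendsto.congr' (hev.mono fun x hx => hx.symm) tendsto_const_nhds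
  · -- v > a
    rw [indicator_of_mem (by simpa using h)]
    have hev : ∀ᶠ T in atTop, G d a T v = ff d ((⌈T * v⌉₊ : ℝ) / T) := by
      filter_upwards [eventually_gt_atTop (0:ℝ)] with T hT0
      have hm0 : (0:ℝ) < (⌈T * v⌉₊ : ℝ) := lt_of_lt_of_le (by positivity) (Nat.le_ceil _)
      have hcond : a * T ≤ (⌈T * v⌉₊ : ℝ) := by
        calc a * T ≤ v * T := by gcongr
          _ = T * v := mul_comm _ _
          _ ≤ _ := Nat.le_ceil _
      have hE : -1 / (2 * ((⌈T * v⌉₊ : ℝ) / T)) = -T / (2 * (⌈T * v⌉₊ : ℝ)) := by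
        field_simp
      simp only [G, tf, if_pos hcond, ff, hE]
      rw [Real.div_rpow hm0.le hT0.le, div_mul_eq_mul_div,
        eq_div_iff (by positivity : (0:ℝ) < T ^ (-1 - (d:ℝ)/2)).ne']
      linear_combination ((⌈T * v⌉₊ : ℝ) ^ (-1 - (d:ℝ)/2) *
        Real.exp (-T / (2 * (⌈T * v⌉₊ : ℝ)))) * Tpow d hT0
    have hcont : ContinuousAt (ff d) v := by
      apply ContinuousAt.mul
      · exact Real.continuousAt_rpow_const v _ (Or.inl hv.ne')
      · exact (Real.continuous_exp.continuousAt).comp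
          (ContinuousAt.div continuousAt_const
            ((continuous_const.mul continuous_id).continuousAt) (by positivity))
    exact Tendsto.congr' (hev.mono fun x hx => hx.symm) (hcont.tendsto.comp (tendsto_ceil_div hv))

end RiemannTail

open RiemannTail

/-- For `d ≥ 1` and `a > 0`,
`∑_{n ≥ aT} T^{d/2} n^{-1-d/2} exp (-T/(2n)) → ∫_a^∞ v^{-1-d/2} exp (-1/(2v)) dv`
as `T → ∞`, the sum ranging over integers `n ≥ aT`. -/
theorem riemann_sum_tail_limit (d : ℕ) (hd : 1 ≤ d) (a : ℝ) (ha : 0 < a) :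
    Filter.Tendsto
      (fun T : ℝ => ∑' n : ℕ,
        if a * T ≤ (n : ℝ) then
          T ^ ((d : ℝ) / 2) * (n : ℝ) ^ (-1 - (d : ℝ) / 2) * Real.exp (-T / (2 * n))
        else 0)
      Filter.atTop
      (nhds (∫ v in Set.Ioi a, v ^ (-1 - (d : ℝ) / 2) * Real.exp (-1 / (2 * v)))) := by
  have key : Tendsto (fun T : ℝ => ∫ v in Ioi (0:ℝ), G d a T v) atTop
      (𝓝 (∫ v in Ioi a, v ^ (-1 - (d : ℝ) / 2) * Real.exp (-1 / (2 * v)))) := by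
    have hlim_int : (∫ v in Ioi (0:ℝ), indicator (Ioi a) (ff d) v)
        = ∫ v in Ioi a, v ^ (-1 - (d : ℝ) / 2) * Real.exp (-1 / (2 * v)) := by
      rw [integral_indicator measurableSet_Ioi, Measure.restrict_restrict measurableSet_Ioi,
        inter_eq_self_of_subset_left (Ioi_subset_Ioi ha.le)]
      rfl
    rw [← hlim_int]
    refine tendsto_integral_filter_of_dominated_convergence
      (indicator (Ioi (a/2)) (fun v : ℝ => v ^ (-1 - (d : ℝ) / 2))) ?_ ?_ ?_ ?_
    · exact Eventually.of_forall fun T => (measG d a T).aestronglyMeasurable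
    · filter_upwards [eventually_ge_atTop (2 / a)] with T hT2
      have hT0 : 0 < T := lt_of_lt_of_le (by positivity) hT2
      filter_upwards [self_mem_ae_restrict measurableSet_Ioi] with v hv
      rw [Real.norm_eq_abs, abs_of_nonneg (show (0:ℝ) ≤ G d a T v from
        mul_nonneg hT0.le (tf_nonneg d a T hT0.le _))]
      exact G_le d ha hT2 hv
    · exact (integrable_bound d hd ha).restrict
    · have hae : ∀ᵐ v ∂(volume.restrict (Ioi (0:ℝ))), v ≠ a := by
        refine ae_restrict_of_ae ?_
        rw [ae_iff]
        have hset : {v : ℝ | ¬ v ≠ a} = {a} := by ext x; simp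
        rw [hset]
        exact measure_singleton a
      filter_upwards [self_mem_ae_restrict measurableSet_Ioi, hae] with v hv hva
      exact G_tendsto d ha hv hva
  refine Tendsto.congr' ?_ key
  filter_upwards [eventually_ge_atTop (max 1 (2/a))] with T hT
  exact (sum_eq_integral d hd ha (le_trans (le_max_right _ _) hT)).symm
end
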